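/- Let α, β ∈ ℂ and let (x_n)_{n∈ℤ} be a Somos-5 sequence with coefficients α, β. Then the sequence of ratios w_n := x_{n+2} x_{n−1} / (x_{n+1} x_n) consists of nonzero complex numbers and satisfies the QRT recurrence w_{n−1} w_n w_{n+1} = α w_n + β for all n ∈ ℤ. -/

import Mathlib

/-- For a Somos-5 sequence `x` with coefficients `α, β`, the ratios
`w n = x (n+2) * x (n-1) / (x (n+1) * x n)` are nonzero and satisfy the QRT
recurrence `w (n-1) * w n * w (n+1) = α * w n + β` for all `n : ℤ`. -/
theorem somos5_ratios_qrt (α β : ℂ) (x : ℤ → ℂ)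
    (hx : ∀ n : ℤ, x n ≠ 0)
    (hrec : ∀ n : ℤ, x n * x (n + 5) =
      α * x (n + 1) * x (n + 4) + β * x (n + 2) * x (n + 3))
    (w : ℤ → ℂ)
    (hw : ∀ n : ℤ, w n = x (n + 2) * x (n - 1) / (x (n + 1) * x n)) :
    ∀ n : ℤ, w n ≠ 0 ∧ w (n - 1) * w n * w (n + 1) = α * w n + β := by
  intro n
  constructor
  · rw [hw]
    exact div_ne_zero (mul_ne_zero (hx _) (hx _)) (mul_ne_zero (hx _) (hx _))
  · have h := hrec (n - 2)
    have e1 : n - 2 + 5 = n + 3 := by ring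
    have e2 : n - 2 + 1 = n - 1 := by ring
    have e3 : n - 2 + 4 = n + 2 := by ring
    have e4 : n - 2 + 2 = n := by ring
    have e5 : n - 2 + 3 = n + 1 := by ring
    rw [e1, e2, e3, e4, e5] at h
    rw [hw, hw, hw]
    have e6 : n - 1 + 2 = n + 1 := by ring
    have e7 : n - 1 - 1 = n - 2 := by ring
    have e8 : n - 1 + 1 = n := by ring
    have e9 : n + 1 + 2 = n + 3 := by ring
    have e10 : n + 1 - 1 = n := by ring
    have e11 : n + 1 + 1 = n + 2 := by ring
    rw [e6, e7, e8, e9, e10, e11]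
    have h1 := hx n
    have h2 := hx (n - 1)
    have h3 := hx (n + 1)
    have h4 := hx (n + 2)
    field_simp
    linear_combination h
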